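/- Let G be a connected graph different from a path and let ℓ be a leaf of G adjacent to a vertex of degree 2. Then ℓ does not belong to any minimum connected forcing set of G, and F_c(G) = F_c(G − ℓ). -/

import Mathlib

open SimpleGraph

/-- A vertex is (eventually) colored in the forcing process starting from `S`:
either it is in `S`, or some colored vertex `u` adjacent to it has all of its
other neighbors colored, so `u` forces it. -/
inductive SimpleGraph.Forced {V : Type*} (G : SimpleGraph V) (S : Set V) : V → Prop
  | init {v : V} (hv : v ∈ S) : G.Forced S v
  | force {u w : V} (hu : G.Forced S u) (hadj : G.Adj u w)
      (hothers : ∀ x, G.Adj u x → x ≠ w → G.Forced S x) : G.Forced S w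

/-- `S` is a (zero) forcing set of `G`. -/
def SimpleGraph.IsForcingSet {V : Type*} (G : SimpleGraph V) (S : Set V) : Prop :=
  ∀ v, G.Forced S v

/-- `S` is a connected forcing set of `G`. -/
def SimpleGraph.IsConnForcingSet {V : Type*} (G : SimpleGraph V) (S : Set V) : Prop :=
  G.IsForcingSet S ∧ (G.induce S).Connected

/-- The (zero) forcing number `F(G)`. -/
noncomputable def SimpleGraph.zfNum {V : Type*} (G : SimpleGraph V) : ℕ :=
  sInf {n | ∃ S : Set V, S.ncard = n ∧ G.IsForcingSet S}

/-- The connected forcing number `F_c(G)`. -/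
noncomputable def SimpleGraph.czfNum {V : Type*} (G : SimpleGraph V) : ℕ :=
  sInf {n | ∃ S : Set V, S.ncard = n ∧ G.IsConnForcingSet S}

/-- `G` is a path graph. -/
def SimpleGraph.IsPathGraph {V : Type*} (G : SimpleGraph V) : Prop :=
  ∃ n : ℕ, Nonempty (G ≃g SimpleGraph.pathGraph n)

/-- Deletion of a vertex. -/
def SimpleGraph.delVert {V : Type*} (G : SimpleGraph V) (v : V) :
    SimpleGraph {w : V // w ≠ v} :=
  G.induce {w : V | w ≠ v}

/-- `v` is a leaf (degree-1 vertex) of `G`. -/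
def SimpleGraph.IsLeaf {V : Type*} (G : SimpleGraph V) (v : V) : Prop :=
  (G.neighborSet v).ncard = 1

section Aux

variable {V : Type*} {G : SimpleGraph V}

lemma forced_mono {S T : Set V} (hST : S ⊆ T) {x : V} (h : G.Forced S x) : G.Forced T x := by
  induction h with
  | init hv => exact .init (hST hv)
  | force hu hadj hothers ihu ihoth => exact .force ihu hadj ihoth

lemma forced_trans {S T : Set V} (hST : ∀ s ∈ S, G.Forced T s) {x : V} (h : G.Forced S x) :
    G.Forced T x := by
  induction h with
  | init hv => exact hST _ hv
  | force hu hadj hothers ihu ihoth => exact .force ihu hadj ihoth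

lemma forced_mem_closed {S C : Set V}
    (hC : ∀ u ∈ C, ∀ x, G.Adj u x → (∀ y, G.Adj u y → y ≠ x → y ∈ C) → x ∈ C)
    (hS : S ⊆ C) {z : V} (h : G.Forced S z) : z ∈ C := by
  induction h with
  | init hv => exact hS hv
  | force hu hadj hothers ihu ihoth => exact hC _ ihu _ hadj ihoth

/-- `y` and `z` occur consecutively (in this order) in the list `l`. -/
def Consec (l : List V) (y z : V) : Prop := ∃ i : ℕ, l[i]? = some y ∧ l[i+1]? = some z

lemma Consec.mem_left {l : List V} {y z : V} (h : Consec l y z) : y ∈ l := by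
  obtain ⟨i, h1, _⟩ := h
  obtain ⟨hi, rfl⟩ := List.getElem?_eq_some_iff.1 h1
  exact List.getElem_mem _

lemma Consec.mem_right {l : List V} {y z : V} (h : Consec l y z) : z ∈ l := by
  obtain ⟨i, _, h2⟩ := h
  obtain ⟨hi, rfl⟩ := List.getElem?_eq_some_iff.1 h2
  exact List.getElem_mem _

lemma Consec.append {l : List V} {y z : V} (x : V) (h : Consec l y z) : Consec (l ++ [x]) y z := by
  obtain ⟨i, h1, h2⟩ := h
  have hi : i + 1 < l.length := (List.getElem?_eq_some_iff.1 h2).1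
  exact ⟨i, by rw [List.getElem?_append_left (by omega)]; exact h1,
    by rw [List.getElem?_append_left hi]; exact h2⟩

lemma nodup_getElem?_inj {l : List V} (h : l.Nodup) {i j : ℕ} {a : V}
    (hi : l[i]? = some a) (hj : l[j]? = some a) : i = j := by
  obtain ⟨hi', hi2⟩ := List.getElem?_eq_some_iff.1 hi
  obtain ⟨hj', hj2⟩ := List.getElem?_eq_some_iff.1 hj
  exact (h.getElem_inj_iff).1 (hi2.trans hj2.symm)

end Aux

section Chain

variable {V : Type*} {G : SimpleGraph V} {ℓ v : V}

/-- The invariant for the chain-building process: every vertex of the list other than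
the current head `c` has all its neighbors placed consecutively to it in the list. -/
def ChainInv (G : SimpleGraph V) (l : List V) (c : V) : Prop :=
  ∀ y ∈ l, y ≠ c → ∀ z, G.Adj y z → Consec l y z ∨ Consec l z y

lemma chain_extend [Fintype V] (hforce : G.IsForcingSet {ℓ, v}) :
    ∀ (n : ℕ) (l : List V) (c : V), l.Chain' G.Adj → l.Nodup → l.getLast? = some c →
      ℓ ∈ l → v ∈ l → ChainInv G l c → Fintype.card V ≤ l.length + n →
      ∃ (l' : List V) (c' : V), l'.Chain' G.Adj ∧ l'.Nodup ∧ l'.getLast? = some c' ∧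
        ChainInv G l' c' ∧ ∀ x : V, x ∈ l' := by
  intro n
  induction n with
  | zero =>
    intro l c h1 h2 h3 h4 h5 h6 h7
    refine ⟨l, c, h1, h2, h3, h6, ?_⟩
    intro x
    by_contra hx
    have hn : (x :: l).Nodup := by simp [h2, hx]
    have := hn.length_le_card
    simp only [List.length_cons] at this
    omega
  | succ n ih =>
    intro l c h1 h2 h3 h4 h5 h6 h7
    by_cases hall : ∀ x : V, x ∈ l
    · exact ⟨l, c, h1, h2, h3, h6, hall⟩
    · push_neg at hall
      obtain ⟨x₀, hx₀⟩ := hall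
      have hnc : ¬ (∀ u ∈ {y : V | y ∈ l}, ∀ x, G.Adj u x →
          (∀ y, G.Adj u y → y ≠ x → y ∈ {y : V | y ∈ l}) → x ∈ {y : V | y ∈ l}) := by
        intro hcl
        refine hx₀ (forced_mem_closed hcl ?_ (hforce x₀))
        intro s hs
        rcases hs with rfl | hs
        · exact h4
        · rcases hs with rfl; exact h5
      push_neg at hnc
      obtain ⟨u, hu, x, hux, hothers, hxl⟩ := hnc
      have huc : u = c := by
        by_contra hne
        rcases h6 u hu hne x hux with h | h
        · exact hxl h.mem_right
        · exact hxl h.mem_left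
      rw [huc] at hux hothers
      clear huc
      have hxc : x ∉ l := hxl
      have hlen1 : 1 ≤ l.length := by
        cases l with
        | nil => simp at h4
        | cons a t => simp
      have hlastc : l[l.length - 1]? = some c := by
        rw [← List.getLast?_eq_getElem?]; exact h3
      refine ih (l ++ [x]) x ?_ ?_ List.getLast?_concat (by simp [h4]) (by simp [h5]) ?_
        (by simp; omega)
      · refine List.isChain_append.2 ⟨h1, List.isChain_singleton _, ?_⟩
        intro a ha b hb
        have ha' : a = c := by rw [h3] at ha; exact (Option.mem_some_iff.1 ha).symm
        have hb' : b = x := by simp at hb; exact hb.symm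
        rw [ha', hb']; exact hux
      · simp [List.nodup_append, h2, hxc]; rintro a ha rfl; exact hxc ha
      · intro y hy hyx z hz
        rcases List.mem_append.1 hy with hy | hy
        · by_cases hyc : y = c
          · subst hyc
            by_cases hzx : z = x
            · subst hzx
              left
              refine ⟨l.length - 1, ?_, ?_⟩
              · rw [List.getElem?_append_left (by omega)]; exact hlastc
              · have he : l.length - 1 + 1 = l.length := by omega
                rw [he]; exact List.getElem?_concat_length
            · have hzl : z ∈ l := hothers z hz hzx
              have hzc : z ≠ y := hz.ne'
              rcases h6 z hzl hzc y hz.symm with h | h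
              · right; exact h.append x
              · exfalso
                obtain ⟨i, hi1, hi2⟩ := h
                have hieq : i = l.length - 1 := nodup_getElem?_inj h2 hi1 hlastc
                have := (List.getElem?_eq_some_iff.1 hi2).1
                omega
          · rcases h6 y hy hyc z hz with h | h
            · left; exact h.append x
            · right; exact h.append x
        · simp at hy
          exact absurd hy hyx

lemma isPathGraph_of_forcing_pair [Fintype V] (hNl : ∀ z, G.Adj ℓ z ↔ z = v)
    (hadj : G.Adj ℓ v) (hforce : G.IsForcingSet {ℓ, v}) : G.IsPathGraph := by
  classical
  have hne : ℓ ≠ v := hadj.ne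
  have hbase : ChainInv G [ℓ, v] v := by
    intro y hy hyc z hz
    have hyl : y = ℓ := by
      have hy' : y = ℓ ∨ y = v := by simpa using hy
      rcases hy' with rfl | rfl
      · rfl
      · exact absurd rfl hyc
    subst hyl
    have : z = v := (hNl z).1 hz
    subst this
    left; exact ⟨0, rfl, rfl⟩
  obtain ⟨l, c, hChain, hNodup, hLast, hInv, hall⟩ :=
    chain_extend hforce (Fintype.card V) [ℓ, v] v (List.isChain_pair.2 hadj) (by simp [hne])
      (by simp) (by simp) (by simp) hbase (by simp)
  -- full adjacency characterization
  have hCon : ∀ {y z : V}, Consec l y z → G.Adj y z := by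
    intro y z hc
    obtain ⟨i, h1, h2⟩ := hc
    obtain ⟨hi1, he1⟩ := List.getElem?_eq_some_iff.1 h1
    obtain ⟨hi2, he2⟩ := List.getElem?_eq_some_iff.1 h2
    have := List.isChain_iff_getElem.1 hChain i (by omega)
    rwa [he1, he2] at this
  have hadj_iff : ∀ y z, G.Adj y z ↔ (Consec l y z ∨ Consec l z y) := by
    intro y z
    constructor
    · intro h
      by_cases hyc : y = c
      · subst hyc
        have hzc : z ≠ y := h.ne'
        rcases hInv z (hall z) hzc y h.symm with hh | hh
        · right; exact hh
        · left; exact hh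
      · exact hInv y (hall y) hyc z h
    · rintro (h | h)
      · exact hCon h
      · exact (hCon h).symm
  -- the equivalence
  have hbij : Function.Bijective (fun i : Fin l.length => l[(i : ℕ)]) := by
    constructor
    · intro i j hij
      exact Fin.ext ((hNodup.getElem_inj_iff).1 hij)
    · intro x
      obtain ⟨i, hi, he⟩ := List.mem_iff_getElem.1 (hall x)
      exact ⟨⟨i, hi⟩, he⟩
  refine ⟨l.length, ⟨SimpleGraph.Iso.symm ⟨Equiv.ofBijective _ hbij, ?_⟩⟩⟩
  intro i j
  show G.Adj l[(i : ℕ)] l[(j : ℕ)] ↔ (pathGraph l.length).Adj i j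
  rw [pathGraph_adj, hadj_iff]
  constructor
  · rintro (⟨k, hk1, hk2⟩ | ⟨k, hk1, hk2⟩)
    · left
      have hki : k = (i : ℕ) :=
        nodup_getElem?_inj hNodup hk1 (List.getElem?_eq_some_iff.2 ⟨i.isLt, rfl⟩)
      have hkj : k + 1 = (j : ℕ) :=
        nodup_getElem?_inj hNodup hk2 (List.getElem?_eq_some_iff.2 ⟨j.isLt, rfl⟩)
      omega
    · right
      have hki : k = (j : ℕ) :=
        nodup_getElem?_inj hNodup hk1 (List.getElem?_eq_some_iff.2 ⟨j.isLt, rfl⟩)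
      have hkj : k + 1 = (i : ℕ) :=
        nodup_getElem?_inj hNodup hk2 (List.getElem?_eq_some_iff.2 ⟨i.isLt, rfl⟩)
      omega
  · rintro (h | h)
    · left
      refine ⟨(i : ℕ), List.getElem?_eq_some_iff.2 ⟨i.isLt, rfl⟩, ?_⟩
      rw [h]
      exact List.getElem?_eq_some_iff.2 ⟨j.isLt, rfl⟩
    · right
      refine ⟨(j : ℕ), List.getElem?_eq_some_iff.2 ⟨j.isLt, rfl⟩, ?_⟩
      rw [h]
      exact List.getElem?_eq_some_iff.2 ⟨i.isLt, rfl⟩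

end Chain

section Conn

variable {V : Type*} {G : SimpleGraph V}

lemma walk_closed {α : Type*} {H : SimpleGraph α} (A : Set α)
    (hA : ∀ x ∈ A, ∀ y, H.Adj x y → y ∈ A) {x y : α} (p : H.Walk x y) (hx : x ∈ A) : y ∈ A := by
  induction p with
  | nil => exact hx
  | cons h q ih => exact ih (hA _ hx _ h)

lemma induce_connected_delete {S : Set V} (hc : (G.induce S).Connected) {a b : V}
    (hb : b ∈ S) (hab : b ≠ a) (hnb : ∀ x, G.Adj a x → x = b) :
    (G.induce (S \ {a})).Connected := by
  have key : ∀ (m : ℕ) (x y : ↑S) (p : (G.induce S).Walk x y) (hx : (x : V) ≠ a)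
      (hy : (y : V) ≠ a), p.length ≤ m →
      (G.induce (S \ {a})).Reachable ⟨x.1, x.2, hx⟩ ⟨y.1, y.2, hy⟩ := by
    intro m
    induction m with
    | zero =>
      intro x y p hx hy hle
      cases p with
      | nil => rfl
      | cons h q => simp at hle
    | succ m ih =>
      intro x y p hx hy hle
      cases p with
      | nil => rfl
      | @cons _ x₁ _ h q =>
        by_cases h1 : (x₁ : V) = a
        · cases q with
          | nil => exact absurd h1 hy
          | @cons _ x₂ _ h2 q2 =>
            have hadj2 : G.Adj (x₁ : V) (x₂ : V) := h2
            have hx2 : (x₂ : V) = b := hnb _ (h1 ▸ hadj2)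
            have hadj1 : G.Adj (x : V) (x₁ : V) := h
            have hx1 : (x : V) = b := hnb _ (h1 ▸ hadj1.symm)
            have hxx2 : x₂ = x := Subtype.ext (hx2.trans hx1.symm)
            subst hxx2
            exact ih _ _ q2 hx hy (by simp at hle; omega)
        · have step : (G.induce (S \ {a})).Adj ⟨x.1, x.2, hx⟩ ⟨x₁.1, x₁.2, h1⟩ :=
            (h : G.Adj (x : V) (x₁ : V))
          exact step.reachable.trans (ih x₁ y q h1 hy (by simp at hle; omega))
  have hne : Nonempty ↑(S \ {a}) := ⟨⟨b, hb, hab⟩⟩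
  refine ⟨fun x y => ?_⟩
  obtain ⟨p⟩ := hc.preconnected ⟨x.1, x.2.1⟩ ⟨y.1, y.2.1⟩
  have hx : (x : V) ≠ a := x.2.2
  have hy : (y : V) ≠ a := y.2.2
  have := key p.length _ _ p hx hy le_rfl
  have ex : (⟨x.1, x.2.1, hx⟩ : ↑(S \ {a})) = x := Subtype.ext rfl
  have ey : (⟨y.1, y.2.1, hy⟩ : ↑(S \ {a})) = y := Subtype.ext rfl
  rwa [ex, ey] at this

lemma induce_connected_delete' {a : V} {S T : Set V} (hT : T = S \ {a}) (hc : (G.induce S).Connected)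
    {b : V} (hb : b ∈ S) (hab : b ≠ a) (hnb : ∀ x, G.Adj a x → x = b) :
    (G.induce T).Connected := by
  subst hT
  exact induce_connected_delete hc hb hab hnb

end Conn

section Transfer

variable {V : Type*} {G : SimpleGraph V} {ℓ v w : V}

lemma transfer1 (hNl : ∀ z, G.Adj ℓ z ↔ z = v) {S : Set V} (hlS : ℓ ∉ S) {x : V}
    (h : G.Forced S x) :
    (∀ hx : x ≠ ℓ, (G.delVert ℓ).Forced {y | (y : V) ∈ S} ⟨x, hx⟩) ∧
      (x = ℓ → ∀ hv : v ≠ ℓ, (G.delVert ℓ).Forced {y | (y : V) ∈ S} ⟨v, hv⟩) := by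
  induction h with
  | init hmem =>
    constructor
    · intro hx; exact .init hmem
    · intro he; exact absurd (he ▸ hmem) hlS
  | @force u x hu hadj' hothers ihu ihoth =>
    constructor
    · intro hx
      by_cases hul : u = ℓ
      · subst hul
        have hxv : x = v := (hNl x).1 hadj'
        subst hxv
        exact ihu.2 rfl hx
      · have hadjD : (G.delVert ℓ).Adj ⟨u, hul⟩ ⟨x, hx⟩ := hadj'
        refine .force (ihu.1 hul) hadjD ?_
        rintro ⟨y, hyl⟩ hadjy hne
        exact (ihoth y hadjy (fun hh => hne (Subtype.ext hh))).1 hyl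
    · rintro rfl hv
      have huv : u = v := (hNl u).1 hadj'.symm
      subst huv
      exact ihu.1 hv

lemma transfer2 (hNl : ∀ z, G.Adj ℓ z ↔ z = v) (hNv : ∀ z, G.Adj v z ↔ z = ℓ ∨ z = w)
    (hvw : G.Adj v w) (hvl : v ≠ ℓ) (hwl : w ≠ ℓ)
    {S' : Set {x : V // x ≠ ℓ}} {SG : Set V}
    (hsub : ∀ x ∈ S', (x : V) ∈ SG)
    (hv' : (⟨v, hvl⟩ : {x : V // x ≠ ℓ}) ∈ S' → (⟨w, hwl⟩ : {x : V // x ≠ ℓ}) ∈ S' ∨ ℓ ∈ SG)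
    {x : {x : V // x ≠ ℓ}} (h : (G.delVert ℓ).Forced S' x) :
    G.Forced SG (x : V) ∧ (x = ⟨v, hvl⟩ → G.Forced SG w) := by
  induction h with
  | @init x hmem =>
    refine ⟨.init (hsub _ hmem), ?_⟩
    rintro rfl
    rcases hv' hmem with hw | hl
    · exact .init (hsub _ hw)
    · refine .force (u := v) (.init (hsub _ hmem)) hvw ?_
      intro y hy hyw
      have : y = ℓ := ((hNv y).1 hy).resolve_right hyw
      exact this ▸ .init hl
  | @force u x hu hadj' hothers ihu ihoth =>
    have hadjG : G.Adj (u : V) (x : V) := hadj'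
    by_cases hxv : x = ⟨v, hvl⟩
    · subst hxv
      have huw : u = ⟨w, hwl⟩ := by
        rcases (hNv (u : V)).1 hadjG.symm with hh | hh
        · exact absurd hh u.2
        · exact Subtype.ext hh
      subst huw
      have hFw : G.Forced SG w := ihu.1
      refine ⟨?_, fun _ => hFw⟩
      refine .force (u := w) hFw hvw.symm ?_
      intro y hy hyv
      have hyl : y ≠ ℓ := by
        rintro rfl
        exact hvw.ne' ((hNl w).1 hy.symm)
      exact (ihoth ⟨y, hyl⟩ (hy : G.Adj w y) (fun he => hyv (congrArg Subtype.val he))).1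
    · refine ⟨?_, fun hh => absurd hh hxv⟩
      by_cases huv : u = ⟨v, hvl⟩
      · subst huv
        have hxw : (x : V) = w := by
          rcases (hNv (x : V)).1 hadjG with hh | hh
          · exact absurd hh x.2
          · exact hh
        rw [hxw]
        exact ihu.2 rfl
      · refine .force (u := (u : V)) ihu.1 hadjG ?_
        intro y hyG hyx
        by_cases hyl : y = ℓ
        · subst hyl
          exact absurd (Subtype.ext ((hNl (u : V)).1 hyG.symm)) huv
        · exact (ihoth ⟨y, hyl⟩ hyG (fun he => hyx (congrArg Subtype.val he))).1

/-- The isomorphism between an induced subgraph avoiding `ℓ` and the corresponding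
induced subgraph of `G.delVert ℓ`. -/
def moveIso (S : Set V) (hS : ∀ x ∈ S, x ≠ ℓ) :
    G.induce S ≃g (G.delVert ℓ).induce {x : {w : V // w ≠ ℓ} | (x : V) ∈ S} where
  toFun := fun x => ⟨⟨x.1, hS _ x.2⟩, x.2⟩
  invFun := fun y => ⟨y.1.1, y.2⟩
  left_inv := fun x => rfl
  right_inv := fun y => rfl
  map_rel_iff' := Iff.rfl

end Transfer

theorem leaf_next_to_degree_two_vertex {V : Type*} [Fintype V]
    (G : SimpleGraph V) (hG : G.Connected) (hnp : ¬ G.IsPathGraph)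
    (ℓ v : V) (hleaf : G.IsLeaf ℓ) (hadj : G.Adj ℓ v)
    (hdeg : (G.neighborSet v).ncard = 2) :
    (∀ S : Set V, G.IsConnForcingSet S → S.ncard = G.czfNum → ℓ ∉ S) ∧
      G.czfNum = (G.delVert ℓ).czfNum := by
  classical
  -- Basic structure of the neighborhoods of ℓ and v.
  have hNleq : G.neighborSet ℓ = {v} := by
    obtain ⟨a, ha⟩ := Set.ncard_eq_one.1 hleaf
    have hv : v ∈ G.neighborSet ℓ := hadj
    rw [ha] at hv ⊢
    rw [Set.mem_singleton_iff.1 hv]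
  have hNl : ∀ z, G.Adj ℓ z ↔ z = v := by
    intro z
    constructor
    · intro h
      have : z ∈ G.neighborSet ℓ := h
      rwa [hNleq, Set.mem_singleton_iff] at this
    · rintro rfl; exact hadj
  have hvl : v ≠ ℓ := hadj.ne'
  obtain ⟨w, hwl, hNveq⟩ : ∃ w, w ≠ ℓ ∧ G.neighborSet v = {ℓ, w} := by
    obtain ⟨a, b, hab, hN⟩ := Set.ncard_eq_two.1 hdeg
    have hl : ℓ ∈ G.neighborSet v := hadj.symm
    rw [hN] at hl
    rcases hl with rfl | rfl
    · exact ⟨b, fun h => hab h.symm, hN⟩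
    · exact ⟨a, fun h => hab h, by rw [hN, Set.pair_comm]⟩
  have hNv : ∀ z, G.Adj v z ↔ z = ℓ ∨ z = w := by
    intro z
    constructor
    · intro h
      have : z ∈ G.neighborSet v := h
      rwa [hNveq] at this
    · rintro (rfl | rfl)
      · exact hadj.symm
      · have : z ∈ G.neighborSet v := by rw [hNveq]; exact Or.inr rfl
        exact this
  have hvw : G.Adj v w := (hNv w).2 (Or.inr rfl)
  have hwv : w ≠ v := hvw.ne'
  -- a path contradiction helper
  have hPath : ¬ G.IsForcingSet {ℓ, v} := by
    intro hf
    exact hnp (isPathGraph_of_forcing_pair hNl hadj hf)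
  -- Part 1: ℓ is in no minimum connected forcing set.
  have part1 : ∀ S : Set V, G.IsConnForcingSet S → S.ncard = G.czfNum → ℓ ∉ S := by
    intro S hcf hcard hlS
    by_cases hvS : v ∈ S
    · by_cases hwS : w ∈ S
      · -- remove ℓ : smaller connected forcing set, contradiction with minimality
        have hvS' : v ∈ S \ {ℓ} := ⟨hvS, hvl⟩
        have hwS' : w ∈ S \ {ℓ} := ⟨hwS, hwl⟩
        have hforced_l : G.Forced (S \ {ℓ}) ℓ := by
          refine .force (u := v) (.init hvS') hadj.symm ?_
          intro y hy hyl
          have : y = w := ((hNv y).1 hy).resolve_left hyl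
          exact this ▸ .init hwS'
        have hf : G.IsForcingSet (S \ {ℓ}) := by
          intro x
          refine forced_trans ?_ (hcf.1 x)
          intro s hs
          by_cases hsl : s = ℓ
          · exact hsl ▸ hforced_l
          · exact .init ⟨hs, hsl⟩
        have hconn : (G.induce (S \ {ℓ})).Connected := by
          refine induce_connected_delete hcf.2 hvS hvl ?_
          intro x hx
          exact (hNl x).1 hx
        have hmem : (S \ {ℓ}).ncard ∈
            {n | ∃ S : Set V, S.ncard = n ∧ G.IsConnForcingSet S} := ⟨S \ {ℓ}, rfl, hf, hconn⟩
        have hle : G.czfNum ≤ (S \ {ℓ}).ncard := Nat.sInf_le hmem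
        have hcard' : (S \ {ℓ}).ncard = S.ncard - 1 :=
          Set.ncard_diff_singleton_of_mem hlS
        have hpos : 0 < S.ncard := (Set.ncard_pos (Set.toFinite S)).2 ⟨ℓ, hlS⟩
        omega
      · -- S = {ℓ, v}
        have hsub : ∀ t : ↑S, (t : V) ∈ ({ℓ, v} : Set V) := by
          intro t
          have hreach := hcf.2.preconnected ⟨ℓ, hlS⟩ t
          obtain ⟨p⟩ := hreach
          refine walk_closed {z : ↑S | (z : V) ∈ ({ℓ, v} : Set V)} ?_ p (Or.inl rfl)
          rintro x hx y hxy
          have hxyG : G.Adj (x : V) (y : V) := hxy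
          rcases hx with hx | hx
          · have : (y : V) = v := (hNl (y : V)).1 (by rw [← hx]; exact hxyG)
            exact Or.inr this
          · simp only [Set.mem_singleton_iff] at hx
            have := (hNv (y : V)).1 (by rw [← hx]; exact hxyG)
            rcases this with hh | hh
            · exact Or.inl hh
            · exact absurd (hh ▸ y.2) hwS
        have hSeq : S = {ℓ, v} := by
          apply Set.eq_of_subset_of_subset
          · intro t ht; exact hsub ⟨t, ht⟩
          · rintro t (rfl | rfl)
            · exact hlS
            · exact hvS
        exact hPath (hSeq ▸ hcf.1)
    · -- S = {ℓ}
      have hsub : ∀ t : ↑S, (t : V) = ℓ := by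
        intro t
        obtain ⟨p⟩ := hcf.2.preconnected ⟨ℓ, hlS⟩ t
        refine walk_closed {z : ↑S | (z : V) = ℓ} ?_ p rfl
        rintro x hx y hxy
        have hxyG : G.Adj (x : V) (y : V) := hxy
        have : (y : V) = v := (hNl (y : V)).1 (by rw [← hx]; exact hxyG)
        exact absurd (this ▸ y.2) hvS
      have hSeq : S = {ℓ} := by
        apply Set.eq_of_subset_of_subset
        · intro t ht; exact hsub ⟨t, ht⟩
        · rintro t rfl; exact hlS
      refine hPath ?_
      intro x
      exact forced_mono (by intro s hs; exact Or.inl hs) (hSeq ▸ hcf.1 x)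
  refine ⟨part1, ?_⟩
  -- notation
  have hconnG' : (G.delVert ℓ).Connected := by
    have h1 : (G.induce (Set.univ : Set V)).Connected :=
      (induceUnivIso G).connected_iff.mpr hG
    show (G.induce {w : V | w ≠ ℓ}).Connected
    refine induce_connected_delete' (by ext z; simp) h1 (Set.mem_univ v) hvl ?_
    intro x hx; exact (hNl x).1 hx
  -- nonemptiness of both czfNum index sets
  have hGne : {n | ∃ S : Set V, S.ncard = n ∧ G.IsConnForcingSet S}.Nonempty := by
    refine ⟨(Set.univ : Set V).ncard, Set.univ, rfl, fun x => .init trivial, ?_⟩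
    exact (induceUnivIso G).connected_iff.mpr hG
  have hG'ne : {n | ∃ S : Set {x : V // x ≠ ℓ},
      S.ncard = n ∧ (G.delVert ℓ).IsConnForcingSet S}.Nonempty := by
    refine ⟨(Set.univ : Set {x : V // x ≠ ℓ}).ncard, Set.univ, rfl, fun x => .init trivial, ?_⟩
    exact (induceUnivIso (G.delVert ℓ)).connected_iff.mpr hconnG'
  -- direction 1 : czfNum (G.delVert ℓ) ≤ czfNum G
  have dir1 : (G.delVert ℓ).czfNum ≤ G.czfNum := by
    obtain ⟨S, hScard, hScf⟩ := Nat.sInf_mem hGne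
    have hScard' : S.ncard = G.czfNum := hScard
    have hlS : ℓ ∉ S := part1 S hScf hScard'
    have hforce' : (G.delVert ℓ).IsForcingSet {y : {x : V // x ≠ ℓ} | (y : V) ∈ S} := by
      rintro ⟨x, hx⟩
      exact (transfer1 hNl hlS (hScf.1 x)).1 hx
    have hconn' : ((G.delVert ℓ).induce {y : {x : V // x ≠ ℓ} | (y : V) ∈ S}).Connected :=
      (moveIso S (fun x hx h => hlS (by rwa [h] at hx))).connected_iff.mp hScf.2
    have hcardeq : ({y : {x : V // x ≠ ℓ} | (y : V) ∈ S}).ncard = S.ncard := by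
      have himg : Subtype.val '' {y : {x : V // x ≠ ℓ} | (y : V) ∈ S} = S := by
        ext z
        simp only [Set.mem_image, Set.mem_setOf_eq]
        constructor
        · rintro ⟨a, ha, rfl⟩; exact ha
        · intro hz; exact ⟨⟨z, fun h => hlS (by rwa [h] at hz)⟩, hz, rfl⟩
      calc ({y : {x : V // x ≠ ℓ} | (y : V) ∈ S}).ncard
          = (Subtype.val '' {y : {x : V // x ≠ ℓ} | (y : V) ∈ S}).ncard :=
            (Set.ncard_image_of_injective _ Subtype.val_injective).symm
        _ = S.ncard := by rw [himg]
    have hle : (G.delVert ℓ).czfNum ≤ ({y : {x : V // x ≠ ℓ} | (y : V) ∈ S}).ncard :=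
      Nat.sInf_le ⟨_, rfl, hforce', hconn'⟩
    omega
  -- direction 2 : czfNum G ≤ czfNum (G.delVert ℓ)
  have dir2 : G.czfNum ≤ (G.delVert ℓ).czfNum := by
    obtain ⟨S', hS'card, hS'cf⟩ := Nat.sInf_mem hG'ne
    have hS'card' : S'.ncard = (G.delVert ℓ).czfNum := hS'card
    by_cases hcase : (⟨v, hvl⟩ : {x : V // x ≠ ℓ}) ∈ S' ∧ (⟨w, hwl⟩ : {x : V // x ≠ ℓ}) ∉ S'
    · -- then S' = {ṽ} and G would be a path : contradiction
      exfalso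
      have hsub : ∀ t : ↑S', (t : {x : V // x ≠ ℓ}) = ⟨v, hvl⟩ := by
        intro t
        obtain ⟨p⟩ := hS'cf.2.preconnected ⟨⟨v, hvl⟩, hcase.1⟩ t
        refine walk_closed {z : ↑S' | (z : {x : V // x ≠ ℓ}) = ⟨v, hvl⟩} ?_ p rfl
        rintro x hx y hxy
        have hxval : ((x : {x : V // x ≠ ℓ}) : V) = v := congrArg Subtype.val hx
        have hxyG : G.Adj ((x : {x : V // x ≠ ℓ}) : V) ((y : {x : V // x ≠ ℓ}) : V) := hxy
        have hvy : G.Adj v ((y : {x : V // x ≠ ℓ}) : V) := by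
          rw [← hxval]; exact hxyG
        rcases (hNv _).1 hvy with hh | hh
        · exact absurd hh (y : {x : V // x ≠ ℓ}).2
        · have : (y : {x : V // x ≠ ℓ}) = ⟨w, hwl⟩ := Subtype.ext hh
          exact absurd (this ▸ y.2) hcase.2
      have hS'eq : S' = {⟨v, hvl⟩} := by
        apply Set.eq_of_subset_of_subset
        · intro t ht; exact hsub ⟨t, ht⟩
        · rintro t rfl; exact hcase.1
      have hT2 : ∀ x : {x : V // x ≠ ℓ}, G.Forced {ℓ, v} (x : V) := by
        intro x
        refine (transfer2 hNl hNv hvw hvl hwl (S' := S') (SG := {ℓ, v}) ?_ ?_ (hS'cf.1 x)).1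
        · intro y hy
          rw [hS'eq] at hy
          rw [Set.mem_singleton_iff.1 hy]
          exact Or.inr rfl
        · intro _; exact Or.inr (Or.inl rfl)
      refine hPath ?_
      intro x
      by_cases hxl : x = ℓ
      · exact hxl ▸ .init (Or.inl rfl)
      · exact hT2 ⟨x, hxl⟩
    · have hv' : (⟨v, hvl⟩ : {x : V // x ≠ ℓ}) ∈ S' →
          (⟨w, hwl⟩ : {x : V // x ≠ ℓ}) ∈ S' ∨ ℓ ∈ Subtype.val '' S' := by
        intro hm
        left
        by_contra hw
        exact hcase ⟨hm, hw⟩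
      have hT2 : ∀ x : {x : V // x ≠ ℓ},
          G.Forced (Subtype.val '' S') (x : V) ∧
            (x = ⟨v, hvl⟩ → G.Forced (Subtype.val '' S') w) := by
        intro x
        exact transfer2 hNl hNv hvw hvl hwl (fun y hy => Set.mem_image_of_mem _ hy) hv'
          (hS'cf.1 x)
      have hlSG : ℓ ∉ Subtype.val '' S' := by
        rintro ⟨y, _, hyv⟩
        exact y.2 hyv
      have hforce : G.IsForcingSet (Subtype.val '' S') := by
        intro x
        by_cases hxl : x = ℓ
        · subst hxl
          refine .force (u := v) (hT2 ⟨v, hvl⟩).1 hadj.symm ?_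
          intro y hy hyl
          have hyw : y = w := ((hNv y).1 hy).resolve_left hyl
          subst hyw
          exact (hT2 ⟨y, hwl⟩).1
        · exact (hT2 ⟨x, hxl⟩).1
      have hsetseq : {x : {w : V // w ≠ ℓ} | (x : V) ∈ Subtype.val '' S'} = S' := by
        ext x
        simp only [Set.mem_setOf_eq]
        constructor
        · rintro ⟨a, ha, hav⟩
          rwa [Subtype.val_injective hav] at ha
        · intro hx; exact Set.mem_image_of_mem _ hx
      have hconn : (G.induce (Subtype.val '' S')).Connected := by
        rw [(moveIso (Subtype.val '' S') (fun x hx h => hlSG (by rwa [h] at hx))).connected_iff, hsetseq]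
        exact hS'cf.2
      have hcardeq : (Subtype.val '' S').ncard = S'.ncard :=
        Set.ncard_image_of_injective _ Subtype.val_injective
      have hle : G.czfNum ≤ (Subtype.val '' S').ncard :=
        Nat.sInf_le ⟨_, rfl, hforce, hconn⟩
      omega
  exact le_antisymm dir2 dir1
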